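/- Lipschitz stability of the line-integral functional along nearby reverse-flow curves (key estimate (C.3) in the proof of Proposition 3.7): under the setting, (A2), (A4), the diffeomorphism assumption and the kernel assumptions, fix x ∈ E, ρ > 0 small enough that 𝕋_{x,ρ} ⊆ E, n ≥ 1, and arbitrary fixed data (z_i,s_{i+1})_{0≤i<n} ∈ Fⁿ, and let Ĝⁿ(ξ,t) = n^{−1} Σ_{i=0}^{n−1} v_i^{−d} K_d((z_i−ξ)/v_i) 1{s_{i+1} > t}. Then there exists a constant c ≥ 0 (depending on n, the data, and the Lipschitz and boundedness constants, but not on y) such that for every y ∈ D_{x,ρ}: | ∫_{C_y} Ĝⁿ(ξ,θ_y(ξ)) G(ξ,θ_y(ξ)) ν∞(ξ) dξ − ∫_{C_x} Ĝⁿ(ξ,τ_x(ξ)) G(ξ,τ_x(ξ)) ν∞(ξ) dξ | ≤ c |x − y|. -/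

import Mathlib

open MeasureTheory ProbabilityTheory Filter Set Real Asymptotics
open scoped ENNReal NNReal Classical Topology


private lemma mul4_le' {a b c e A B C E : ℝ} (ha0 : 0 ≤ a) (hb0 : 0 ≤ b) (hc0 : 0 ≤ c)
    (he0 : 0 ≤ e) (hA : a ≤ A) (hB : b ≤ B) (hC : c ≤ C) (hE : e ≤ E) :
    a * b * c * e ≤ A * B * C * E := by
  have hA0 : 0 ≤ A := ha0.trans hA
  have hB0 : 0 ≤ B := hb0.trans hB
  have hC0 : 0 ≤ C := hc0.trans hC
  have h1 : a * b ≤ A * B := mul_le_mul hA hB hb0 hA0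
  have h2 : a * b * c ≤ A * B * C := mul_le_mul h1 hC hc0 (mul_nonneg hA0 hB0)
  exact mul_le_mul h2 hE he0 (mul_nonneg (mul_nonneg hA0 hB0) hC0)

private lemma abs_prod4_sub' {a b c e a' b' c' e' Ca Cb Cc Ce Da Db Dc De : ℝ}
    (ha : |a| ≤ Ca) (hb : |b| ≤ Cb) (hc : |c| ≤ Cc) (he : |e| ≤ Ce)
    (ha' : |a'| ≤ Ca) (hb' : |b'| ≤ Cb) (hc' : |c'| ≤ Cc) (he' : |e'| ≤ Ce)
    (da : |a - a'| ≤ Da) (db : |b - b'| ≤ Db) (dc : |c - c'| ≤ Dc) (de : |e - e'| ≤ De) :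
    |a * b * c * e - a' * b' * c' * e'| ≤
      Da * Cb * Cc * Ce + Ca * Db * Cc * Ce + Ca * Cb * Dc * Ce + Ca * Cb * Cc * De := by
  have key : a*b*c*e - a'*b'*c'*e' =
      (a - a')*b*c*e + (a'*(b - b')*c*e + (a'*b'*(c - c')*e + a'*b'*c'*(e - e'))) := by ring
  have t1 : |(a - a')*b*c*e| ≤ Da * Cb * Cc * Ce := by
    rw [abs_mul, abs_mul, abs_mul]
    exact mul4_le' (abs_nonneg _) (abs_nonneg _) (abs_nonneg _) (abs_nonneg _) da hb hc he
  have t2 : |a'*(b - b')*c*e| ≤ Ca * Db * Cc * Ce := by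
    rw [abs_mul, abs_mul, abs_mul]
    exact mul4_le' (abs_nonneg _) (abs_nonneg _) (abs_nonneg _) (abs_nonneg _) ha' db hc he
  have t3 : |a'*b'*(c - c')*e| ≤ Ca * Cb * Dc * Ce := by
    rw [abs_mul, abs_mul, abs_mul]
    exact mul4_le' (abs_nonneg _) (abs_nonneg _) (abs_nonneg _) (abs_nonneg _) ha' hb' dc he
  have t4 : |a'*b'*c'*(e - e')| ≤ Ca * Cb * Cc * De := by
    rw [abs_mul, abs_mul, abs_mul]
    exact mul4_le' (abs_nonneg _) (abs_nonneg _) (abs_nonneg _) (abs_nonneg _) ha' hb' hc' de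
  calc |a*b*c*e - a'*b'*c'*e'|
      ≤ |(a - a')*b*c*e| + (|a'*(b - b')*c*e| + (|a'*b'*(c - c')*e| + |a'*b'*c'*(e - e')|)) := by
        rw [key]
        exact (abs_add_le _ _).trans (by gcongr; exact (abs_add_le _ _).trans (by gcongr; exact abs_add_le _ _))
    _ ≤ Da * Cb * Cc * Ce + (Ca * Db * Cc * Ce + (Ca * Cb * Dc * Ce + Ca * Cb * Cc * De)) := by
        gcongr
    _ = _ := by ring

private lemma exists_measurable_backPrimitive (g : ℝ → ℝ) (hg : ∀ u, 0 ≤ g u) :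
    ∃ I : ℝ → ℝ, Measurable I ∧ (∀ t, 0 ≤ I t) ∧
      ∀ t : ℝ, 0 ≤ t → I t = ∫ u in (-t)..(0:ℝ), g u := by
  classical
  set A : Set ℝ := {t | 0 ≤ t ∧ IntegrableOn g (Set.Ioc (-t) 0) volume} with hA
  set L : ℝ → ℝ≥0∞ := fun t => ∫⁻ u in Set.Ioc (-t) (0:ℝ), ENNReal.ofReal (g u) with hL
  have hLmono : Monotone L := fun t t' htt' =>
    lintegral_mono_set (Set.Ioc_subset_Ioc_left (neg_le_neg htt'))
  have hAoc : A.OrdConnected := by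
    constructor
    rintro t1 ⟨ht1, _⟩ t2 ⟨_, hi2⟩ z hz
    exact ⟨ht1.trans hz.1, hi2.mono_set (Set.Ioc_subset_Ioc_left (neg_le_neg hz.2))⟩
  refine ⟨fun t => if t ∈ A then (L t).toReal else 0, ?_, ?_, ?_⟩
  · exact Measurable.ite hAoc.measurableSet
      (ENNReal.measurable_toReal.comp hLmono.measurable) measurable_const
  · intro t; dsimp only; split_ifs
    exacts [ENNReal.toReal_nonneg, le_refl 0]
  · intro t ht
    have hle : (-t) ≤ (0:ℝ) := neg_nonpos.mpr ht
    rw [intervalIntegral.integral_of_le hle]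
    by_cases hmem : t ∈ A
    · simp only [hmem, if_true]
      rw [MeasureTheory.integral_eq_lintegral_of_nonneg_ae
        (Filter.Eventually.of_forall fun u => hg u) hmem.2.aestronglyMeasurable]
    · simp only [hmem, if_false]
      exact (MeasureTheory.integral_undef fun hcontra => hmem ⟨ht, hcontra⟩).symm

noncomputable section

/-- The Euclidean state space `ℝ^d`. -/
abbrev Rd (d : ℕ) := EuclideanSpace ℝ (Fin d)

variable {d : ℕ}

/-- Deterministic exit time `t⁺(x) = inf {t > 0 : Φ(x,t) ∈ ∂E}`, with value in `ℝ≥0∞`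
(`⊤` when the flow never reaches the boundary). -/
def tplus (Φ : Rd d → ℝ → Rd d) (E : Set (Rd d)) (x : Rd d) : ℝ≥0∞ :=
  ⨅ t : {t : ℝ // 0 < t ∧ Φ x t ∈ frontier E}, ENNReal.ofReal t.1

/-- Deterministic exit time of the reverse flow `t⁻(x) = inf {t > 0 : Φ(x,−t) ∈ ∂E}`,
real-valued. -/
def tminusR (Φ : Rd d → ℝ → Rd d) (E : Set (Rd d)) (x : Rd d) : ℝ :=
  sInf {t : ℝ | 0 < t ∧ Φ x (-t) ∈ frontier E}

/-- Conditional survival function `G(x,t) = exp(−∫₀ᵗ λ(Φ(x,s)) ds)`. -/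
def Gfun (Φ : Rd d → ℝ → Rd d) (lam : Rd d → ℝ) (x : Rd d) (t : ℝ) : ℝ :=
  Real.exp (-(∫ s in (0:ℝ)..t, lam (Φ x s)))

/-- Conditional density `f(x,t) = λ(Φ(x,t)) G(x,t)`. -/
def ffun (Φ : Rd d → ℝ → Rd d) (lam : Rd d → ℝ) (x : Rd d) (t : ℝ) : ℝ :=
  lam (Φ x t) * Gfun Φ lam x t

/-- The state space `F = ∪_{x ∈ E} {x} × [0, t⁺(x)]` of the chain `(Z_n, S_{n+1})`. -/
def Fset (Φ : Rd d → ℝ → Rd d) (E : Set (Rd d)) : Set (Rd d × ℝ) :=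
  {p | p.1 ∈ E ∧ 0 ≤ p.2 ∧ ENNReal.ofReal p.2 ≤ tplus Φ E p.1}

/-- Bandwidth `v_k = v₀ (k+1)^{-α}`. -/
def vband (v0 α : ℝ) (k : ℕ) : ℝ := v0 * ((k : ℝ) + 1) ^ (-α)

/-- Bandwidth `w_k = w₀ (k+1)^{-β}`. -/
def wband (w0 β : ℝ) (k : ℕ) : ℝ := w0 * ((k : ℝ) + 1) ^ (-β)

/-- The measure with density `Q(y, ·)` with respect to Lebesgue measure. -/
def Qmeas (Q : Rd d → Rd d → ℝ) (y : Rd d) : Measure (Rd d) :=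
  volume.withDensity fun ξ => ENNReal.ofReal (Q y ξ)

/-- The measure with density `ν∞`. -/
def numeas (nu : Rd d → ℝ) : Measure (Rd d) :=
  volume.withDensity fun y => ENNReal.ofReal (nu y)

/-- Transition kernel `P(x,·) = ∫ S(x,dt) Q(Φ(x,t),·)` of the post-jump chain. -/
def Pker (Φ : Rd d → ℝ → Rd d) (Q : Rd d → Rd d → ℝ) (S : Rd d → Measure ℝ)
    (x : Rd d) : Measure (Rd d) :=
  (S x).bind fun t => Qmeas Q (Φ x t)

/-- Transition kernel `R((x,t), A×B) = ∫_A Q(Φ(x,t),ξ) S(ξ,B) dξ` of `(Z_n, S_{n+1})`. -/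
def Rker (Φ : Rd d → ℝ → Rd d) (Q : Rd d → Rd d → ℝ) (S : Rd d → Measure ℝ)
    (p : Rd d × ℝ) : Measure (Rd d × ℝ) :=
  (Qmeas Q (Φ p.1 p.2)).bind fun ξ => (S ξ).map fun u => (ξ, u)

/-- `n`-step iterate of a transition kernel applied to an initial distribution. -/
def iterKer {A : Type*} [MeasurableSpace A] (P : A → Measure A) : ℕ → Measure A → Measure A
  | 0, μ => μ
  | n + 1, μ => (iterKer P n μ).bind P

/-- Total-variation distance between two (finite) measures. -/
def tvDist {A : Type*} [MeasurableSpace A] (μ ν : Measure A) : ℝ :=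
  ⨆ B : {B : Set A // MeasurableSet B}, |(μ B.1).toReal - (ν B.1).toReal|

/-- Specification of the conditional inter-jump-time kernel `S(x,·)`:
a probability measure with `S(x,(t,∞)) = G(x,t)` for `t < t⁺(x)` and `0` afterwards. -/
def SKernelSpec (Φ : Rd d → ℝ → Rd d) (lam : Rd d → ℝ) (E : Set (Rd d))
    (S : Rd d → Measure ℝ) : Prop :=
  (∀ x ∈ E, IsProbabilityMeasure (S x)) ∧
  (∀ B : Set ℝ, MeasurableSet B → Measurable fun x => S x B) ∧
  (∀ x ∈ E, ∀ t : ℝ, 0 ≤ t →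
    (ENNReal.ofReal t < tplus Φ E x → S x (Ioi t) = ENNReal.ofReal (Gfun Φ lam x t)) ∧
    (tplus Φ E x ≤ ENNReal.ofReal t → S x (Ioi t) = 0))

/-- `(Z_n, S_{n+1})_{n≥0}` is a Markov chain with transition kernel `R` with respect to
the filtration `𝓕`. -/
def IsMarkovR {Ω : Type*} {mΩ : MeasurableSpace Ω} (Pr : Measure Ω) (𝓕 : Filtration ℕ mΩ)
    (Φ : Rd d → ℝ → Rd d) (Q : Rd d → Rd d → ℝ) (S : Rd d → Measure ℝ)
    (Z : ℕ → Ω → Rd d) (Snext : ℕ → Ω → ℝ) : Prop :=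
  ∀ (n : ℕ) (g : Rd d × ℝ → ℝ), Measurable g → (∃ C, ∀ p, |g p| ≤ C) →
    (Pr[(fun ω => g (Z (n + 1) ω, Snext (n + 1) ω)) | 𝓕 n]) =ᵐ[Pr]
      fun ω => ∫ ξ, (∫ u, g (ξ, u) ∂(S ξ)) * Q (Φ (Z n ω) (Snext n ω)) ξ

/-- The basic setting: a PDMP with characteristics `(λ, Q, Φ)` on the open set `E`, and
the Markov chain `(Z_n, S_{n+1})_{n≥0}` of its post-jump locations and inter-jump times,
adapted to the filtration `𝓕` of the probability space `(Ω, Pr)`. -/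
structure BaseSetting {Ω : Type*} {mΩ : MeasurableSpace Ω} (Pr : Measure Ω)
    (𝓕 : Filtration ℕ mΩ) (E : Set (Rd d)) (Φ : Rd d → ℝ → Rd d)
    (lam : Rd d → ℝ) (Q : Rd d → Rd d → ℝ) (S : Rd d → Measure ℝ)
    (Z : ℕ → Ω → Rd d) (Snext : ℕ → Ω → ℝ) : Prop where
  prob : IsProbabilityMeasure Pr
  E_open : IsOpen E
  flow_add : ∀ (x : Rd d) (t u : ℝ), Φ x (t + u) = Φ (Φ x t) u
  flow_zero : ∀ x, Φ x 0 = x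
  flow_meas : Measurable (Function.uncurry Φ)
  lam_nonneg : ∀ x, 0 ≤ lam x
  lam_meas : Measurable lam
  lam_locint : ∀ x ∈ E, ∃ ε : ℝ, 0 < ε ∧ IntervalIntegrable (fun u => lam (Φ x u)) volume 0 ε
  Q_meas : Measurable (Function.uncurry Q)
  Q_nonneg : ∀ x y, 0 ≤ Q x y
  Q_one : ∀ x ∈ closure E, Qmeas Q x (E \ {x}) = 1
  S_spec : SKernelSpec Φ lam E S
  Z_meas : ∀ n, Measurable (Z n)
  Snext_meas : ∀ n, Measurable (Snext n)
  adapted : ∀ n : ℕ, ∀ i ≤ n, Measurable[𝓕 n] (Z i) ∧ Measurable[𝓕 n] (Snext i)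
  markov : IsMarkovR Pr 𝓕 Φ Q S Z Snext
  chain_mem : ∀ n, ∀ᵐ ω ∂Pr, (Z n ω, Snext n ω) ∈ Fset Φ E

/-- Assumption (A1): `ν∞` is a probability density on `E` and the laws of the post-jump
chain converge in total variation to `ν∞` from every deterministic start in `E`. -/
def ErgodicA1 (Φ : Rd d → ℝ → Rd d) (Q : Rd d → Rd d → ℝ) (S : Rd d → Measure ℝ)
    (E : Set (Rd d)) (nu : Rd d → ℝ) : Prop :=
  (∀ y, 0 ≤ nu y) ∧ Measurable nu ∧ IsProbabilityMeasure (numeas nu) ∧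
    numeas nu Eᶜ = 0 ∧
    ∀ x ∈ E, Tendsto
      (fun n => tvDist (iterKer (Pker Φ Q S) n (Measure.dirac x)) (numeas nu))
      atTop (𝓝 0)

/-- Assumptions (A2): regularity of `Q`, `f`, `G` and `t⁺`. -/
structure RegularityA2 (Φ : Rd d → ℝ → Rd d) (lam : Rd d → ℝ) (Q : Rd d → Rd d → ℝ)
    (E : Set (Rd d)) : Prop where
  Q_bdd : ∃ C, ∀ x y, Q x y ≤ C
  f_bdd : ∃ C, ∀ x ∈ E, ∀ t : ℝ, 0 < t → ENNReal.ofReal t < tplus Φ E x →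
    ffun Φ lam x t ≤ C
  f_lip : ∃ L, 0 ≤ L ∧ ∀ x ∈ E, ∀ y ∈ E, ∀ s t : ℝ, 0 < s → s < t →
    ENNReal.ofReal t < min (tplus Φ E x) (tplus Φ E y) →
    |ffun Φ lam x t - ffun Φ lam y s| ≤ L * (|t - s| + ‖y - x‖)
  Q_lip : ∃ L, 0 ≤ L ∧ ∀ x ∈ closure E, ∀ y z : Rd d, |Q x y - Q x z| ≤ L * ‖y - z‖
  G_lip : ∃ L, 0 ≤ L ∧ ∀ x ∈ E, ∀ y ∈ E, ∀ t : ℝ, 0 < t →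
    ENNReal.ofReal t < min (tplus Φ E x) (tplus Φ E y) →
    |Gfun Φ lam x t - Gfun Φ lam y t| ≤ L * ‖x - y‖
  tplus_cont : ContinuousOn (tplus Φ E) E

/-- Assumptions (A3): contraction of the kernel `P` and Hölder-type regularity of
`(x,t,y) ↦ Q(Φ(x,t),y)` (the class `Li(r₁,r₂)`). -/
def MixingA3 (Φ : Rd d → ℝ → Rd d) (Q : Rd d → Rd d → ℝ) (S : Rd d → Measure ℝ)
    (E : Set (Rd d)) : Prop :=
  ∃ a₁ a₂ : ℝ, 1 ≤ a₁ ∧ 0 ≤ a₂ ∧ a₂ < 1 ∧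
    (∀ x ∈ E, ∀ y ∈ E,
      (∫⁻ u, ∫⁻ v, ENNReal.ofReal (‖u - v‖ ^ a₁) ∂(Pker Φ Q S y) ∂(Pker Φ Q S x)) ≤
        ENNReal.ofReal (a₂ * ‖x - y‖ ^ a₁)) ∧
    ∃ r₁ r₂ c : ℝ, 0 < r₁ ∧ 0 < r₂ ∧ 2 * (r₁ + r₂) ≤ a₁ ∧ 0 ≤ c ∧
      ∀ (x₁ x₂ : Rd d) (t₁ t₂ : ℝ) (y₁ y₂ : Rd d),
        |Q (Φ x₁ t₁) y₁ - Q (Φ x₂ t₂) y₂| ≤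
          c * ‖((x₁, t₁, y₁) : Rd d × ℝ × Rd d) - (x₂, t₂, y₂)‖ ^ r₂ *
            (‖((x₁, t₁, y₁) : Rd d × ℝ × Rd d)‖ ^ r₁ +
              ‖((x₂, t₂, y₂) : Rd d × ℝ × Rd d)‖ ^ r₁ + 1)

/-- Kernel assumptions on `K_d` and `K_1`: nonnegative, bounded, measurable, integrating to
one, supported in the ball of radius `δ`, with `K_d` Lipschitz. -/
structure KernelPair (Kd : Rd d → ℝ) (K1 : ℝ → ℝ) (δ : ℝ) : Prop where
  δ_pos : 0 < δ
  d_nonneg : ∀ u, 0 ≤ Kd u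
  d_meas : Measurable Kd
  d_bdd : ∃ C, ∀ u, Kd u ≤ C
  d_int : (∫ u, Kd u) = 1
  d_supp : Function.support Kd ⊆ Metric.ball 0 δ
  d_lip : ∃ L, 0 ≤ L ∧ ∀ u v, |Kd u - Kd v| ≤ L * ‖u - v‖
  one_nonneg : ∀ u, 0 ≤ K1 u
  one_meas : Measurable K1
  one_bdd : ∃ C, ∀ u, K1 u ≤ C
  one_int : (∫ u, K1 u) = 1
  one_supp : Function.support K1 ⊆ Metric.ball 0 δ

/-- `τ_d² = ∫ K_d²`. -/
def taud2 (Kd : Rd d → ℝ) : ℝ := ∫ u, Kd u ^ 2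

/-- `τ₁² = ∫ K₁²`. -/
def tau12 (K1 : ℝ → ℝ) : ℝ := ∫ u, K1 u ^ 2

/-- Condition (C0) at `(x,t)`: `t + w₀δ < inf {t⁺(ξ) : ξ ∈ B(x, v₀δ)}`. -/
def C0cond (Φ : Rd d → ℝ → Rd d) (E : Set (Rd d)) (v0 w0 δ : ℝ) (x : Rd d) (t : ℝ) : Prop :=
  ENNReal.ofReal (t + w0 * δ) < ⨅ ξ ∈ Metric.ball x (v0 * δ), tplus Φ E ξ

/-- The admissible set `𝒜` of bandwidth exponents. -/
def AdmissibleAB (d : ℕ) (α β : ℝ) : Prop :=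
  0 < α ∧ 0 < β ∧ α * d + β < 1 ∧ 1 < α * d + β + 2 * min α β

variable {Ω : Type*}

/-- The kernel estimator `F̂ⁿ(x,t)`. -/
def Fhat (Kd : Rd d → ℝ) (K1 : ℝ → ℝ) (v0 w0 α β : ℝ) (Z : ℕ → Ω → Rd d)
    (Snext : ℕ → Ω → ℝ) (n : ℕ) (x : Rd d) (t : ℝ) (ω : Ω) : ℝ :=
  (n : ℝ)⁻¹ * ∑ i ∈ Finset.range n,
    (vband v0 α i ^ d)⁻¹ * (wband w0 β i)⁻¹ * Kd ((vband v0 α i)⁻¹ • (Z i ω - x)) *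
      K1 ((Snext i ω - t) / wband w0 β i)

/-- The kernel estimator `Ĝⁿ(x,t)`. -/
def Ghat (Kd : Rd d → ℝ) (v0 α : ℝ) (Z : ℕ → Ω → Rd d) (Snext : ℕ → Ω → ℝ)
    (n : ℕ) (x : Rd d) (t : ℝ) (ω : Ω) : ℝ :=
  (n : ℝ)⁻¹ * ∑ i ∈ Finset.range n,
    (vband v0 α i ^ d)⁻¹ * Kd ((vband v0 α i)⁻¹ • (Z i ω - x)) *
      (if t < Snext i ω then 1 else 0)

/-- The kernel estimator `ν̂ⁿ(x)`. -/
def nuhat (Kd : Rd d → ℝ) (v0 α : ℝ) (Z : ℕ → Ω → Rd d) (n : ℕ) (x : Rd d) (ω : Ω) : ℝ :=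
  (n : ℝ)⁻¹ * ∑ i ∈ Finset.range n,
    (vband v0 α i ^ d)⁻¹ * Kd ((vband v0 α i)⁻¹ • (Z i ω - x))

/-- Convergence in distribution of a sequence of random variables to the law `μ`,
tested against bounded continuous functions. -/
def TendstoInDistribution {Ω : Type*} {mΩ : MeasurableSpace Ω} (Pr : Measure Ω)
    {V : Type*} [TopologicalSpace V] [MeasurableSpace V] (X : ℕ → Ω → V)
    (μ : Measure V) : Prop :=
  ∀ g : BoundedContinuousFunction V ℝ,
    Tendsto (fun n => ∫ ω, g (X n ω) ∂Pr) atTop (𝓝 (∫ v, g v ∂μ))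

/-- The increment `A_j` of the martingale decomposition. -/
def Avec (Kd : Rd d → ℝ) (K1 : ℝ → ℝ) (v0 w0 α β : ℝ) (x : Rd d) (t : ℝ)
    (Z : ℕ → Ω → Rd d) (Snext : ℕ → Ω → ℝ) (j : ℕ) (ω : Ω) : ℝ × ℝ × ℝ :=
  ((vband v0 α j ^ d)⁻¹ * (wband w0 β j)⁻¹ * Kd ((vband v0 α j)⁻¹ • (Z j ω - x)) *
      K1 ((Snext j ω - t) / wband w0 β j),
    (vband v0 α j ^ d)⁻¹ * Kd ((vband v0 α j)⁻¹ • (Z j ω - x)) *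
      (if t < Snext j ω then 1 else 0),
    (vband v0 α j ^ d)⁻¹ * Kd ((vband v0 α j)⁻¹ • (Z j ω - x)))

/-- The compensator `B_j` of the martingale decomposition. -/
def Bvec (Φ : Rd d → ℝ → Rd d) (lam : Rd d → ℝ) (Q : Rd d → Rd d → ℝ)
    (Kd : Rd d → ℝ) (K1 : ℝ → ℝ) (v0 w0 α β : ℝ) (x : Rd d) (t : ℝ)
    (Z : ℕ → Ω → Rd d) (Snext : ℕ → Ω → ℝ) (j : ℕ) (ω : Ω) : ℝ × ℝ × ℝ :=
  (∫ u : Rd d, ∫ v : ℝ,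
      Q (Φ (Z (j - 1) ω) (Snext (j - 1) ω)) (x + vband v0 α j • u) *
        ffun Φ lam (x + vband v0 α j • u) (t + wband w0 β j * v) * Kd u * K1 v,
    ∫ u : Rd d,
      Q (Φ (Z (j - 1) ω) (Snext (j - 1) ω)) (x + vband v0 α j • u) *
        Gfun Φ lam (x + vband v0 α j • u) t * Kd u,
    ∫ u : Rd d,
      Q (Φ (Z (j - 1) ω) (Snext (j - 1) ω)) (x + vband v0 α j • u) * Kd u)

/-- The martingale `M_n = Σ_{j=1}^n (A_j − B_j)`. -/
def Mmart (Φ : Rd d → ℝ → Rd d) (lam : Rd d → ℝ) (Q : Rd d → Rd d → ℝ)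
    (Kd : Rd d → ℝ) (K1 : ℝ → ℝ) (v0 w0 α β : ℝ) (x : Rd d) (t : ℝ)
    (Z : ℕ → Ω → Rd d) (Snext : ℕ → Ω → ℝ) (n : ℕ) (ω : Ω) : ℝ × ℝ × ℝ :=
  ∑ j ∈ Finset.Icc 1 n,
    (Avec Kd K1 v0 w0 α β x t Z Snext j ω - Bvec Φ lam Q Kd K1 v0 w0 α β x t Z Snext j ω)

/-- The remainder term `R_n` of the decomposition
`(F̂ⁿ, Ĝⁿ, ν̂ⁿ) − (ν f, ν G, ν) = M_{n−1}/n + R_n`. -/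
def RnRem (Φ : Rd d → ℝ → Rd d) (lam : Rd d → ℝ) (Q : Rd d → Rd d → ℝ) (nu : Rd d → ℝ)
    (Kd : Rd d → ℝ) (K1 : ℝ → ℝ) (v0 w0 α β : ℝ) (x : Rd d) (t : ℝ)
    (Z : ℕ → Ω → Rd d) (Snext : ℕ → Ω → ℝ) (n : ℕ) (ω : Ω) : ℝ × ℝ × ℝ :=
  (Fhat Kd K1 v0 w0 α β Z Snext n x t ω, Ghat Kd v0 α Z Snext n x t ω,
      nuhat Kd v0 α Z n x ω)
    - (nu x * ffun Φ lam x t, nu x * Gfun Φ lam x t, nu x)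
    - (n : ℝ)⁻¹ • Mmart Φ lam Q Kd K1 v0 w0 α β x t Z Snext (n - 1) ω

/-- The three coordinate projections of `ℝ³`. -/
def comp3 : Fin 3 → ℝ × ℝ × ℝ → ℝ := ![fun p => p.1, fun p => p.2.1, fun p => p.2.2]

/-- Entry of the predictable square variation process
`⟨M⟩_n = Σ_{k=1}^n E[(M_k − M_{k−1})(M_k − M_{k−1})ᵀ | 𝓕_{k−1}]`. -/
def qvEntry {Ω : Type*} {mΩ : MeasurableSpace Ω} (Pr : Measure Ω) (𝓕 : Filtration ℕ mΩ)
    (M : ℕ → Ω → ℝ × ℝ × ℝ) (f g : ℝ × ℝ × ℝ → ℝ) (n : ℕ) (ω : Ω) : ℝ :=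
  ∑ k ∈ Finset.Icc 1 n,
    (Pr[(fun ω' => f (M k ω' - M (k - 1) ω') * g (M k ω' - M (k - 1) ω')) | 𝓕 (k - 1)]) ω

/-- The disc `D_{x,ρ} = B(x,ρ) ∩ ℍ_x`, `ℍ_x` being the hyperplane through `x`
orthogonal to `∇_tΦ(x,0)`. -/
def Dxrho (DΦ : Rd d → ℝ → Rd d) (x : Rd d) (ρ : ℝ) : Set (Rd d) :=
  Metric.ball x ρ ∩ {y | (inner ℝ (y - x) (DΦ x 0) : ℝ) = 0}

/-- The reverse-flow curve `C_x = {Φ(x,−t) : 0 ≤ t < t⁻(x)}`. -/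
def Ccurve (Φ : Rd d → ℝ → Rd d) (E : Set (Rd d)) (x : Rd d) : Set (Rd d) :=
  (fun t => Φ x (-t)) '' Ico 0 (tminusR Φ E x)

/-- The tube `𝕋_{x,ρ} = ∪_{y ∈ D_{x,ρ}} C_y`. -/
def Ttube (Φ : Rd d → ℝ → Rd d) (E : Set (Rd d)) (DΦ : Rd d → ℝ → Rd d)
    (x : Rd d) (ρ : ℝ) : Set (Rd d) :=
  ⋃ y ∈ Dxrho DΦ x ρ, Ccurve Φ E y

/-- Line integral `∫_{C_x} g(ξ, τ_x(ξ)) dξ = ∫₀^{t⁻(x)} g(Φ(x,−t), t) |∇_tΦ(x,−t)| dt`. -/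
def lineIntegral (Φ : Rd d → ℝ → Rd d) (DΦ : Rd d → ℝ → Rd d) (E : Set (Rd d))
    (x : Rd d) (g : Rd d → ℝ → ℝ) : ℝ :=
  ∫ t in (0:ℝ)..tminusR Φ E x, g (Φ x (-t)) t * ‖DΦ x (-t)‖

/-- Assumptions (A4): `ν∞` bounded and Lipschitz, `t⁻` Lipschitz, the flow Lipschitz in
space uniformly in time, `∇_tΦ` bounded and Lipschitz. -/
def RegularityA4 (Φ DΦ : Rd d → ℝ → Rd d) (E : Set (Rd d)) (nu : Rd d → ℝ) : Prop :=
  (∃ C, ∀ y, |nu y| ≤ C) ∧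
  (∃ L, 0 ≤ L ∧ ∀ x y : Rd d, |nu x - nu y| ≤ L * ‖x - y‖) ∧
  (∃ L, 0 ≤ L ∧ ∀ x ∈ E, ∀ y ∈ E, |tminusR Φ E x - tminusR Φ E y| ≤ L * ‖x - y‖) ∧
  (∃ L, 0 ≤ L ∧ ∀ (t : ℝ) (x y : Rd d), ‖Φ x t - Φ y t‖ ≤ L * ‖x - y‖) ∧
  (∃ C, ∀ (x : Rd d) (t : ℝ), ‖DΦ x t‖ ≤ C) ∧
  (∃ L, 0 ≤ L ∧ ∀ (t : ℝ) (x y : Rd d), ‖DΦ x t - DΦ y t‖ ≤ L * ‖x - y‖)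

/-- The reverse flow `t ↦ Φ(ξ,−t)` is a diffeomorphic change of variables. -/
def ReverseFlowDiffeo (Φ DΦ : Rd d → ℝ → Rd d) (E : Set (Rd d)) : Prop :=
  ∀ ξ ∈ E, Function.Injective (fun t : ℝ => Φ ξ (-t)) ∧ ∀ t : ℝ, DΦ ξ t ≠ 0

/-- The estimator `Ĝⁿ` built from fixed (conditioned-upon) data `(z_i, s_{i+1})`. -/
def GhatData (Kd : Rd d → ℝ) (v0 α : ℝ) (z : ℕ → Rd d) (s : ℕ → ℝ)
    (n : ℕ) (ξ : Rd d) (t : ℝ) : ℝ :=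
  (n : ℝ)⁻¹ * ∑ i ∈ Finset.range n,
    (vband v0 α i ^ d)⁻¹ * Kd ((vband v0 α i)⁻¹ • (z i - ξ)) * (if t < s i then 1 else 0)

/-- The estimator `F̂ⁿ` built from fixed (conditioned-upon) data `(z_i, s_{i+1})`. -/
def FhatData (Kd : Rd d → ℝ) (K1 : ℝ → ℝ) (v0 w0 α β : ℝ) (z : ℕ → Rd d) (s : ℕ → ℝ)
    (n : ℕ) (ξ : Rd d) (t : ℝ) : ℝ :=
  (n : ℝ)⁻¹ * ∑ i ∈ Finset.range n,
    (vband v0 α i ^ d)⁻¹ * (wband w0 β i)⁻¹ * Kd ((vband v0 α i)⁻¹ • (z i - ξ)) *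
      K1 ((s i - t) / wband w0 β i)


set_option maxHeartbeats 2000000 in
theorem stmt12 {d : ℕ} (hd : 1 ≤ d) (E : Set (Rd d)) (Φ DΦ : Rd d → ℝ → Rd d)
    (lam : Rd d → ℝ) (Q : Rd d → Rd d → ℝ) (nu : Rd d → ℝ)
    (Kd : Rd d → ℝ) (K1 : ℝ → ℝ) (δ v0 α : ℝ)
    (hE : IsOpen E)
    (hflow : ∀ (y : Rd d) (t u : ℝ), Φ y (t + u) = Φ (Φ y t) u)
    (hflow0 : ∀ y, Φ y 0 = y)
    (hDΦ : ∀ (y : Rd d) (t : ℝ), HasDerivAt (Φ y) (DΦ y t) t)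
    (hlam : ∀ y, 0 ≤ lam y)
    (hA2 : RegularityA2 Φ lam Q E) (hA4 : RegularityA4 Φ DΦ E nu)
    (hdiffeo : ReverseFlowDiffeo Φ DΦ E) (hK : KernelPair Kd K1 δ)
    (hv0 : 0 < v0) (hα : 0 < α)
    (x : Rd d) (hx : x ∈ E) (ρ : ℝ) (hρ : 0 < ρ)
    (htube : Ttube Φ E DΦ x ρ ⊆ E)
    (n : ℕ) (hn : 1 ≤ n) (z : ℕ → Rd d) (s : ℕ → ℝ)
    (hdata : ∀ i < n, (z i, s i) ∈ Fset Φ E) :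
    ∃ c : ℝ, 0 ≤ c ∧ ∀ y ∈ Dxrho DΦ x ρ,
      |lineIntegral Φ DΦ E y
          (fun ξ t => GhatData Kd v0 α z s n ξ t * Gfun Φ lam ξ t * nu ξ) -
        lineIntegral Φ DΦ E x
          (fun ξ t => GhatData Kd v0 α z s n ξ t * Gfun Φ lam ξ t * nu ξ)| ≤
        c * ‖x - y‖ := by
  classical
  -- unpack constants
  obtain ⟨CK, hCK⟩ := hK.d_bdd
  obtain ⟨LK, hLK0, hLK⟩ := hK.d_lip
  obtain ⟨⟨Cnu, hCnu⟩, ⟨Lnu, hLnu0, hLnu⟩, ⟨Lt, hLt0, hLt⟩, ⟨LPhi, hLPhi0, hLPhi⟩,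
    ⟨CD, hCD⟩, ⟨LD, hLD0, hLD⟩⟩ := hA4
  obtain ⟨LG, hLG0, hLG⟩ := hA2.G_lip
  have hCK0 : 0 ≤ CK := le_trans (hK.d_nonneg 0) (hCK 0)
  have hCnu0 : 0 ≤ Cnu := le_trans (abs_nonneg _) (hCnu 0)
  have hCD0 : 0 ≤ CD := le_trans (norm_nonneg _) (hCD x 0)
  have hv : ∀ i : ℕ, 0 < vband v0 α i := fun i =>
    mul_pos hv0 (Real.rpow_pos_of_pos (by positivity) _)
  have hvd : ∀ i : ℕ, 0 < (vband v0 α i) ^ d := fun i => pow_pos (hv i) d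
  set SV : ℝ := ∑ i ∈ Finset.range n, ((vband v0 α i) ^ d)⁻¹ with hSV
  set SL : ℝ := ∑ i ∈ Finset.range n, ((vband v0 α i) ^ d)⁻¹ * (vband v0 α i)⁻¹ with hSL
  have hSV0 : 0 ≤ SV := Finset.sum_nonneg fun i _ => inv_nonneg.mpr (hvd i).le
  have hSL0 : 0 ≤ SL := Finset.sum_nonneg fun i _ =>
    mul_nonneg (inv_nonneg.mpr (hvd i).le) (inv_nonneg.mpr (hv i).le)
  have hn0 : (0:ℝ) ≤ (n:ℝ)⁻¹ := by positivity
  obtain ⟨cg, hcg⟩ : ∃ X : ℝ, X = (n:ℝ)⁻¹ * SV * CK := ⟨_, rfl⟩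
  obtain ⟨Lg, hLgdef⟩ : ∃ X : ℝ, X = (n:ℝ)⁻¹ * SL * LK := ⟨_, rfl⟩
  have hcg0 : 0 ≤ cg := by rw [hcg]; exact mul_nonneg (mul_nonneg hn0 hSV0) hCK0
  have hLg0 : 0 ≤ Lg := by rw [hLgdef]; exact mul_nonneg (mul_nonneg hn0 hSL0) hLK0
  -- bounds on GhatData
  have hGhat_bdd : ∀ (ξ : Rd d) (t : ℝ), |GhatData Kd v0 α z s n ξ t| ≤ cg := by
    intro ξ t
    have hterm_nn : ∀ i : ℕ,
        0 ≤ ((vband v0 α i) ^ d)⁻¹ * Kd ((vband v0 α i)⁻¹ • (z i - ξ)) *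
          (if t < s i then (1:ℝ) else 0) := fun i =>
      mul_nonneg (mul_nonneg (inv_nonneg.mpr (hvd i).le) (hK.d_nonneg _))
        (by split <;> norm_num)
    have hnn : 0 ≤ GhatData Kd v0 α z s n ξ t :=
      mul_nonneg hn0 (Finset.sum_nonneg fun i _ => hterm_nn i)
    rw [abs_of_nonneg hnn]
    have hsum : (∑ i ∈ Finset.range n, ((vband v0 α i) ^ d)⁻¹ *
          Kd ((vband v0 α i)⁻¹ • (z i - ξ)) * (if t < s i then (1:ℝ) else 0)) ≤
        ∑ i ∈ Finset.range n, ((vband v0 α i) ^ d)⁻¹ * CK := by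
      refine Finset.sum_le_sum fun i _ => ?_
      have h1 : ((vband v0 α i) ^ d)⁻¹ * Kd ((vband v0 α i)⁻¹ • (z i - ξ)) *
          (if t < s i then (1:ℝ) else 0) ≤
          ((vband v0 α i) ^ d)⁻¹ * Kd ((vband v0 α i)⁻¹ • (z i - ξ)) * 1 := by
        have := mul_nonneg (inv_nonneg.mpr (hvd i).le) (hK.d_nonneg
          ((vband v0 α i)⁻¹ • (z i - ξ)))
        split <;> nlinarith
      refine h1.trans ?_
      rw [mul_one]
      exact mul_le_mul_of_nonneg_left (hCK _) (inv_nonneg.mpr (hvd i).le)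
    calc GhatData Kd v0 α z s n ξ t
        ≤ (n:ℝ)⁻¹ * ∑ i ∈ Finset.range n, ((vband v0 α i) ^ d)⁻¹ * CK :=
          mul_le_mul_of_nonneg_left hsum hn0
      _ = cg := by rw [hcg, hSV, ← Finset.sum_mul]; ring
  have hGhat_lip : ∀ (ξ ξ' : Rd d) (t : ℝ),
      |GhatData Kd v0 α z s n ξ t - GhatData Kd v0 α z s n ξ' t| ≤ Lg * ‖ξ - ξ'‖ := by
    intro ξ ξ' t
    have hrw : GhatData Kd v0 α z s n ξ t - GhatData Kd v0 α z s n ξ' t =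
        (n:ℝ)⁻¹ * ∑ i ∈ Finset.range n,
          (((vband v0 α i) ^ d)⁻¹ * Kd ((vband v0 α i)⁻¹ • (z i - ξ)) *
            (if t < s i then (1:ℝ) else 0) -
          ((vband v0 α i) ^ d)⁻¹ * Kd ((vband v0 α i)⁻¹ • (z i - ξ')) *
            (if t < s i then (1:ℝ) else 0)) := by
      rw [Finset.sum_sub_distrib, mul_sub]; rfl
    rw [hrw, abs_mul, abs_of_nonneg hn0]
    have hsum : |∑ i ∈ Finset.range n,
          (((vband v0 α i) ^ d)⁻¹ * Kd ((vband v0 α i)⁻¹ • (z i - ξ)) *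
            (if t < s i then (1:ℝ) else 0) -
          ((vband v0 α i) ^ d)⁻¹ * Kd ((vband v0 α i)⁻¹ • (z i - ξ')) *
            (if t < s i then (1:ℝ) else 0))| ≤
        ∑ i ∈ Finset.range n,
          ((vband v0 α i) ^ d)⁻¹ * (vband v0 α i)⁻¹ * (LK * ‖ξ - ξ'‖) := by
      refine (Finset.abs_sum_le_sum_abs _ _).trans (Finset.sum_le_sum fun i _ => ?_)
      have hdist : ‖(vband v0 α i)⁻¹ • (z i - ξ) - (vband v0 α i)⁻¹ • (z i - ξ')‖ =
          (vband v0 α i)⁻¹ * ‖ξ - ξ'‖ := by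
        rw [← smul_sub, norm_smul, Real.norm_eq_abs, abs_of_pos (inv_pos.mpr (hv i))]
        congr 1
        rw [show z i - ξ - (z i - ξ') = ξ' - ξ by abel, norm_sub_rev]
      have hK1 : |Kd ((vband v0 α i)⁻¹ • (z i - ξ)) - Kd ((vband v0 α i)⁻¹ • (z i - ξ'))| ≤
          LK * ((vband v0 α i)⁻¹ * ‖ξ - ξ'‖) := by
        rw [← hdist]; exact hLK _ _
      have hind : |(if t < s i then (1:ℝ) else 0)| ≤ 1 := by split <;> norm_num
      calc |((vband v0 α i) ^ d)⁻¹ * Kd ((vband v0 α i)⁻¹ • (z i - ξ)) *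
            (if t < s i then (1:ℝ) else 0) -
          ((vband v0 α i) ^ d)⁻¹ * Kd ((vband v0 α i)⁻¹ • (z i - ξ')) *
            (if t < s i then (1:ℝ) else 0)|
          = ((vband v0 α i) ^ d)⁻¹ *
            |Kd ((vband v0 α i)⁻¹ • (z i - ξ)) - Kd ((vband v0 α i)⁻¹ • (z i - ξ'))| *
            |(if t < s i then (1:ℝ) else 0)| := by
            rw [show ((vband v0 α i) ^ d)⁻¹ * Kd ((vband v0 α i)⁻¹ • (z i - ξ)) *
                (if t < s i then (1:ℝ) else 0) -
              ((vband v0 α i) ^ d)⁻¹ * Kd ((vband v0 α i)⁻¹ • (z i - ξ')) *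
                (if t < s i then (1:ℝ) else 0) =
              ((vband v0 α i) ^ d)⁻¹ *
                (Kd ((vband v0 α i)⁻¹ • (z i - ξ)) - Kd ((vband v0 α i)⁻¹ • (z i - ξ'))) *
                (if t < s i then (1:ℝ) else 0) by ring]
            rw [abs_mul, abs_mul, abs_of_nonneg (inv_nonneg.mpr (hvd i).le)]
        _ ≤ ((vband v0 α i) ^ d)⁻¹ * (LK * ((vband v0 α i)⁻¹ * ‖ξ - ξ'‖)) * 1 := by
            refine mul_le_mul (mul_le_mul_of_nonneg_left hK1
              (inv_nonneg.mpr (hvd i).le)) hind (abs_nonneg _) ?_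
            exact mul_nonneg (inv_nonneg.mpr (hvd i).le)
              (mul_nonneg hLK0 (mul_nonneg (inv_nonneg.mpr (hv i).le) (norm_nonneg _)))
        _ = ((vband v0 α i) ^ d)⁻¹ * (vband v0 α i)⁻¹ * (LK * ‖ξ - ξ'‖) := by ring
    refine (mul_le_mul_of_nonneg_left hsum hn0).trans (le_of_eq ?_)
    rw [← Finset.sum_mul, ← hSL, hLgdef]; ring
  -- bounds on Gfun
  have hG_nonneg : ∀ (ξ : Rd d) (t : ℝ), 0 ≤ Gfun Φ lam ξ t := fun ξ t => (Real.exp_pos _).le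
  have hG_le_one : ∀ (ξ : Rd d) (t : ℝ), 0 ≤ t → Gfun Φ lam ξ t ≤ 1 := by
    intro ξ t ht
    have h0 : 0 ≤ ∫ u in (0:ℝ)..t, lam (Φ ξ u) :=
      intervalIntegral.integral_nonneg ht fun u _ => hlam _
    exact Real.exp_le_one_iff.mpr (neg_nonpos.mpr h0)
  -- the integrand along curves
  obtain ⟨h, hh⟩ : ∃ X : Rd d → ℝ → ℝ, X = fun w t =>
      GhatData Kd v0 α z s n (Φ w (-t)) t * Gfun Φ lam (Φ w (-t)) t * nu (Φ w (-t)) *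
        ‖DΦ w (-t)‖ := ⟨_, rfl⟩
  have hline : ∀ w : Rd d, lineIntegral Φ DΦ E w
      (fun ξ t => GhatData Kd v0 α z s n ξ t * Gfun Φ lam ξ t * nu ξ) =
      ∫ t in (0:ℝ)..(tminusR Φ E w), h w t := by
    intro w
    simp only [lineIntegral, hh]
  obtain ⟨M, hM⟩ : ∃ X : ℝ, X = cg * 1 * Cnu * CD := ⟨_, rfl⟩
  have hM0 : 0 ≤ M := by
    rw [hM]
    exact mul_nonneg (mul_nonneg (mul_nonneg hcg0 zero_le_one) hCnu0) hCD0
  have habs : ∀ (w : Rd d) (t : ℝ), 0 ≤ t → |h w t| ≤ M := by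
    intro w t ht
    rw [hh]; dsimp only
    rw [abs_mul, abs_mul, abs_mul, hM]
    exact mul4_le' (abs_nonneg _) (abs_nonneg _) (abs_nonneg _) (abs_nonneg _)
      (hGhat_bdd _ _)
      (by rw [abs_of_nonneg (hG_nonneg _ _)]; exact hG_le_one _ _ ht)
      (hCnu _) (by rw [abs_norm]; exact hCD _ _)
  -- continuity facts
  have hPhiCont : ∀ w : Rd d, Continuous (Φ w) := fun w =>
    continuous_iff_continuousAt.mpr fun t => (hDΦ w t).continuousAt
  have hnuCont : Continuous nu := by
    have : LipschitzWith (Real.toNNReal Lnu) nu := by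
      apply LipschitzWith.of_dist_le_mul
      intro a b
      rw [Real.dist_eq, dist_eq_norm]
      calc |nu a - nu b| ≤ Lnu * ‖a - b‖ := hLnu a b
        _ ≤ Real.toNNReal Lnu * ‖a - b‖ := by
            gcongr
            exact Real.le_coe_toNNReal Lnu
    exact this.continuous
  -- interval integrability of h w on [a,b] ⊆ [0,∞)
  have hint : ∀ (w : Rd d) (a b : ℝ), 0 ≤ a → a ≤ b →
      IntervalIntegrable (h w) volume a b := by
    intro w a b ha hab
    obtain ⟨I, hImeas, hInn, hIeq⟩ := exists_measurable_backPrimitive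
      (fun u => lam (Φ w u)) (fun u => hlam _)
    obtain ⟨htil, hhtil⟩ : ∃ X : ℝ → ℝ, X = fun t =>
      GhatData Kd v0 α z s n (Φ w (-t)) t * Real.exp (-(I t)) * nu (Φ w (-t)) *
        ‖deriv (Φ w) (-t)‖ := ⟨_, rfl⟩
    have hGeq : ∀ t : ℝ, 0 ≤ t → Gfun Φ lam (Φ w (-t)) t = Real.exp (-(I t)) := by
      intro t ht
      have hfun : (fun s' => lam (Φ (Φ w (-t)) s')) = fun s' => lam (Φ w (s' - t)) :=
        funext fun s' => by rw [← hflow w (-t) s', neg_add_eq_sub]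
      have hch : (∫ s' in (0:ℝ)..t, lam (Φ (Φ w (-t)) s')) =
          ∫ u in (-t)..(0:ℝ), lam (Φ w u) := by
        calc (∫ s' in (0:ℝ)..t, lam (Φ (Φ w (-t)) s'))
            = ∫ s' in (0:ℝ)..t, lam (Φ w (s' - t)) := by rw [hfun]
          _ = ∫ u in (0:ℝ) - t..t - t, lam (Φ w u) :=
              intervalIntegral.integral_comp_sub_right (fun u => lam (Φ w u)) t
          _ = ∫ u in (-t)..(0:ℝ), lam (Φ w u) := by norm_num
      rw [Gfun, hch, ← hIeq t ht]
    have hφm : Continuous (fun t : ℝ => Φ w (-t)) := (hPhiCont w).comp continuous_neg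
    have hGhm : Measurable (fun t : ℝ => GhatData Kd v0 α z s n (Φ w (-t)) t) := by
      simp only [GhatData]
      apply Measurable.const_mul
      apply Finset.measurable_sum
      intro i _
      refine Measurable.mul (Measurable.const_mul ?_ _) ?_
      · exact hK.d_meas.comp ((continuous_const.sub hφm).const_smul
          ((vband v0 α i)⁻¹)).measurable
      · exact Measurable.ite (measurableSet_lt measurable_id measurable_const)
          measurable_const measurable_const
    have hhtm : Measurable htil := by
      rw [hhtil]
      exact ((hGhm.mul (Real.measurable_exp.comp hImeas.neg)).mul
        (hnuCont.measurable.comp hφm.measurable)).mul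
        ((measurable_deriv (Φ w)).norm.comp measurable_neg)
    have hteq : ∀ t : ℝ, 0 ≤ t → htil t = h w t := by
      intro t ht
      rw [hhtil, hh]; dsimp only
      rw [hGeq t ht, (hDΦ w (-t)).deriv]
    have habs' : ∀ t : ℝ, |htil t| ≤ M := by
      intro t
      rw [hhtil]; dsimp only
      rw [abs_mul, abs_mul, abs_mul, hM]
      refine mul4_le' (abs_nonneg _) (abs_nonneg _) (abs_nonneg _) (abs_nonneg _)
        (hGhat_bdd _ _) ?_ (hCnu _) ?_
      · rw [abs_of_nonneg (Real.exp_pos _).le]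
        exact Real.exp_le_one_iff.mpr (neg_nonpos.mpr (hInn t))
      · rw [abs_norm, (hDΦ w (-t)).deriv]; exact hCD _ _
    rw [intervalIntegrable_iff, Set.uIoc_of_le hab]
    have hIone : IntegrableOn htil (Set.Ioc a b) volume := by
      refine Measure.integrableOn_of_bounded (M := M) measure_Ioc_lt_top.ne
        hhtm.aestronglyMeasurable ?_
      exact Filter.Eventually.of_forall fun t => by
        rw [Real.norm_eq_abs]; exact habs' t
    refine hIone.congr ?_
    exact (ae_restrict_mem measurableSet_Ioc).mono fun t ht' => hteq t (ha.trans ht'.1.le)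
  -- geometry of the curves
  have hxD : x ∈ Dxrho DΦ x ρ := ⟨Metric.mem_ball_self hρ, by simp⟩
  have hcurve : ∀ w ∈ Dxrho DΦ x ρ, ∀ t : ℝ, 0 ≤ t → t < tminusR Φ E w → Φ w (-t) ∈ E := by
    intro w hw t ht htlt
    exact htube (Set.mem_biUnion hw ⟨t, ⟨ht, htlt⟩, rfl⟩)
  have htm0 : ∀ w : Rd d, 0 ≤ tminusR Φ E w := fun w =>
    Real.sInf_nonneg fun t ht => ht.1.le
  have htplus : ∀ w ∈ Dxrho DΦ x ρ, ∀ t : ℝ, 0 ≤ t → t < tminusR Φ E w →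
      ENNReal.ofReal t < tplus Φ E (Φ w (-t)) := by
    intro w hw t ht htlt
    have hwE : w ∈ E := by
      have := hcurve w hw 0 le_rfl (lt_of_le_of_lt ht htlt)
      rwa [neg_zero, hflow0] at this
    have hw0 : Φ w 0 ∈ E := by rw [hflow0]; exact hwE
    obtain ⟨ε, hε0, hball'⟩ := Metric.mem_nhds_iff.mp
      (((hPhiCont w).continuousAt).preimage_mem_nhds (hE.mem_nhds hw0))
    refine lt_of_lt_of_le ((ENNReal.ofReal_lt_ofReal_iff (by linarith)).mpr
      (by linarith : t < t + ε/2)) (le_iInf ?_)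
    rintro ⟨u, hu0, hufr⟩
    dsimp only
    refine ENNReal.ofReal_le_ofReal ?_
    by_contra hcon
    push_neg at hcon
    have hmem : Φ (Φ w (-t)) u ∈ E := by
      rw [← hflow w (-t) u]
      rcases le_or_gt u t with hut | hut
      · have h1 := hcurve w hw (t - u) (by linarith) (by linarith)
        rwa [show -t + u = -(t - u) by ring]
      · refine hball' ?_
        rw [Metric.mem_ball, dist_zero_right, Real.norm_eq_abs,
          show -t + u = u - t by ring, abs_of_pos (by linarith)]
        linarith
    rw [hE.frontier_eq] at hufr
    exact hufr.2 hmem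
  -- pointwise Lipschitz estimate
  obtain ⟨Lstar, hLstar⟩ : ∃ X : ℝ, X = Lg * LPhi * 1 * Cnu * CD + cg * (LG * LPhi) * Cnu * CD +
      cg * 1 * (Lnu * LPhi) * CD + cg * 1 * Cnu * LD := ⟨_, rfl⟩
  have hLstar0 : 0 ≤ Lstar := by
    rw [hLstar]
    have n1 : 0 ≤ Lg * LPhi * 1 * Cnu * CD :=
      mul_nonneg (mul_nonneg (mul_nonneg (mul_nonneg hLg0 hLPhi0) zero_le_one) hCnu0) hCD0
    have n2 : 0 ≤ cg * (LG * LPhi) * Cnu * CD :=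
      mul_nonneg (mul_nonneg (mul_nonneg hcg0 (mul_nonneg hLG0 hLPhi0)) hCnu0) hCD0
    have n3 : 0 ≤ cg * 1 * (Lnu * LPhi) * CD :=
      mul_nonneg (mul_nonneg (mul_nonneg hcg0 zero_le_one) (mul_nonneg hLnu0 hLPhi0)) hCD0
    have n4 : 0 ≤ cg * 1 * Cnu * LD :=
      mul_nonneg (mul_nonneg (mul_nonneg hcg0 zero_le_one) hCnu0) hLD0
    linarith
  have hlip : ∀ y ∈ Dxrho DΦ x ρ, y ∈ E → ∀ t : ℝ, 0 < t → t < tminusR Φ E x →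
      t < tminusR Φ E y → |h y t - h x t| ≤ Lstar * ‖x - y‖ := by
    intro y hyD hyE t ht htx hty
    have hξy : Φ y (-t) ∈ E := hcurve y hyD t ht.le hty
    have hξx : Φ x (-t) ∈ E := hcurve x hxD t ht.le htx
    have hPhi_d : ‖Φ y (-t) - Φ x (-t)‖ ≤ LPhi * ‖x - y‖ := by
      rw [show ‖x - y‖ = ‖y - x‖ from norm_sub_rev x y]
      exact hLPhi (-t) y x
    have hd1 : |GhatData Kd v0 α z s n (Φ y (-t)) t - GhatData Kd v0 α z s n (Φ x (-t)) t| ≤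
        Lg * LPhi * ‖x - y‖ := by
      refine (hGhat_lip _ _ _).trans
        ((mul_le_mul_of_nonneg_left hPhi_d hLg0).trans_eq (by ring))
    have hd2 : |Gfun Φ lam (Φ y (-t)) t - Gfun Φ lam (Φ x (-t)) t| ≤
        LG * LPhi * ‖x - y‖ := by
      have hmin : ENNReal.ofReal t < min (tplus Φ E (Φ y (-t))) (tplus Φ E (Φ x (-t))) :=
        lt_min_iff.mpr ⟨htplus y hyD t ht.le hty, htplus x hxD t ht.le htx⟩
      refine (hLG (Φ y (-t)) hξy (Φ x (-t)) hξx t ht hmin).trans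
        ((mul_le_mul_of_nonneg_left hPhi_d hLG0).trans_eq (by ring))
    have hd3 : |nu (Φ y (-t)) - nu (Φ x (-t))| ≤ Lnu * LPhi * ‖x - y‖ := by
      refine (hLnu _ _).trans
        ((mul_le_mul_of_nonneg_left hPhi_d hLnu0).trans_eq (by ring))
    have hd4 : |‖DΦ y (-t)‖ - ‖DΦ x (-t)‖| ≤ LD * ‖x - y‖ := by
      refine (abs_norm_sub_norm_le _ _).trans ?_
      rw [show ‖x - y‖ = ‖y - x‖ from norm_sub_rev x y]
      exact hLD (-t) y x
    have hby : |Gfun Φ lam (Φ y (-t)) t| ≤ 1 := by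
      rw [abs_of_nonneg (hG_nonneg _ _)]; exact hG_le_one _ _ ht.le
    have hbx' : |Gfun Φ lam (Φ x (-t)) t| ≤ 1 := by
      rw [abs_of_nonneg (hG_nonneg _ _)]; exact hG_le_one _ _ ht.le
    have := abs_prod4_sub' (Ca := cg) (Cb := 1) (Cc := Cnu) (Ce := CD)
      (hGhat_bdd (Φ y (-t)) t) hby (hCnu _) (by rw [abs_norm]; exact hCD y (-t))
      (hGhat_bdd (Φ x (-t)) t) hbx' (hCnu _) (by rw [abs_norm]; exact hCD x (-t))
      hd1 hd2 hd3 hd4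
    rw [hh]; dsimp only
    refine this.trans (le_of_eq ?_)
    rw [hLstar]; ring
  -- finishing
  obtain ⟨r, hr0, hballE⟩ := Metric.isOpen_iff.mp hE x hx
  have hbx0 : 0 ≤ tminusR Φ E x := htm0 x
  have hc0 : 0 ≤ Lstar * tminusR Φ E x + M * Lt + M * tminusR Φ E x / r :=
    add_nonneg (add_nonneg (mul_nonneg hLstar0 hbx0) (mul_nonneg hM0 hLt0))
      (div_nonneg (mul_nonneg hM0 hbx0) hr0.le)
  refine ⟨Lstar * tminusR Φ E x + M * Lt + M * tminusR Φ E x / r, hc0, ?_⟩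
  intro y hyD
  rw [hline y, hline x]
  by_cases hyE : y ∈ E
  · -- main case
    set bx := tminusR Φ E x with hbxd
    set byy := tminusR Φ E y with hbyd
    have hby0 : 0 ≤ byy := htm0 y
    set m := min bx byy with hm
    have hm0 : 0 ≤ m := le_min hbx0 hby0
    have hmx : m ≤ bx := min_le_left _ _
    have hmy : m ≤ byy := min_le_right _ _
    have hIx1 : IntervalIntegrable (h x) volume 0 m := hint x 0 m le_rfl hm0
    have hIx2 : IntervalIntegrable (h x) volume m bx := hint x m bx hm0 hmx
    have hIy1 : IntervalIntegrable (h y) volume 0 m := hint y 0 m le_rfl hm0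
    have hIy2 : IntervalIntegrable (h y) volume m byy := hint y m byy hm0 hmy
    have hsplitx : (∫ t in (0:ℝ)..bx, h x t) =
        (∫ t in (0:ℝ)..m, h x t) + ∫ t in m..bx, h x t :=
      (intervalIntegral.integral_add_adjacent_intervals hIx1 hIx2).symm
    have hsplity : (∫ t in (0:ℝ)..byy, h y t) =
        (∫ t in (0:ℝ)..m, h y t) + ∫ t in m..byy, h y t :=
      (intervalIntegral.integral_add_adjacent_intervals hIy1 hIy2).symm
    have key : (∫ t in (0:ℝ)..byy, h y t) - (∫ t in (0:ℝ)..bx, h x t) =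
        (∫ t in (0:ℝ)..m, (h y t - h x t)) +
          ((∫ t in m..byy, h y t) - ∫ t in m..bx, h x t) := by
      rw [hsplitx, hsplity, intervalIntegral.integral_sub hIy1 hIx1]; ring
    have hae : ∀ᵐ t : ℝ, t ≠ m := by
      rw [ae_iff]
      simp only [not_not, Set.setOf_eq_eq_singleton]
      exact measure_singleton m
    have e1 : |∫ t in (0:ℝ)..m, (h y t - h x t)| ≤ Lstar * ‖x - y‖ * m := by
      rw [← Real.norm_eq_abs]
      have := intervalIntegral.norm_integral_le_of_norm_le_const_ae
        (C := Lstar * ‖x - y‖) (f := fun t => h y t - h x t) (a := 0) (b := m) ?_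
      · rwa [sub_zero, abs_of_nonneg hm0] at this
      · filter_upwards [hae] with t htm hmem
        rw [Set.uIoc_of_le hm0] at hmem
        have htm' : t < m := lt_of_le_of_ne hmem.2 htm
        rw [Real.norm_eq_abs]
        exact hlip y hyD hyE t hmem.1 (lt_of_lt_of_le htm' hmx) (lt_of_lt_of_le htm' hmy)
    have e2 : |∫ t in m..byy, h y t| ≤ M * (byy - m) := by
      rw [← Real.norm_eq_abs]
      have := intervalIntegral.norm_integral_le_of_norm_le_const (C := M)
        (f := h y) (a := m) (b := byy) ?_
      · rwa [abs_of_nonneg (by linarith)] at this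
      · intro t hmem
        rw [Set.uIoc_of_le hmy] at hmem
        rw [Real.norm_eq_abs]
        exact habs y t (hm0.trans hmem.1.le)
    have e3 : |∫ t in m..bx, h x t| ≤ M * (bx - m) := by
      rw [← Real.norm_eq_abs]
      have := intervalIntegral.norm_integral_le_of_norm_le_const (C := M)
        (f := h x) (a := m) (b := bx) ?_
      · rwa [abs_of_nonneg (by linarith)] at this
      · intro t hmem
        rw [Set.uIoc_of_le hmx] at hmem
        rw [Real.norm_eq_abs]
        exact habs x t (hm0.trans hmem.1.le)
    have hsumb : (byy - m) + (bx - m) = |bx - byy| := by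
      rcases le_total bx byy with hc | hc
      · rw [hm, min_eq_left hc, abs_of_nonpos (by linarith)]; ring
      · rw [hm, min_eq_right hc, abs_of_nonneg (by linarith)]; ring
    have htmlip : |bx - byy| ≤ Lt * ‖x - y‖ := hLt x hx y hyE
    calc |(∫ t in (0:ℝ)..byy, h y t) - ∫ t in (0:ℝ)..bx, h x t|
        ≤ |∫ t in (0:ℝ)..m, (h y t - h x t)| +
          (|∫ t in m..byy, h y t| + |∫ t in m..bx, h x t|) := by
          rw [key]
          refine (abs_add_le _ _).trans ?_
          gcongr
          exact abs_sub _ _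
      _ ≤ Lstar * ‖x - y‖ * m + (M * (byy - m) + M * (bx - m)) := by gcongr
      _ = Lstar * ‖x - y‖ * m + M * ((byy - m) + (bx - m)) := by ring
      _ ≤ Lstar * ‖x - y‖ * bx + M * (Lt * ‖x - y‖) := by
          have h1 : Lstar * ‖x - y‖ * m ≤ Lstar * ‖x - y‖ * bx := by
            have : 0 ≤ Lstar * ‖x - y‖ := mul_nonneg hLstar0 (norm_nonneg _)
            exact mul_le_mul_of_nonneg_left hmx this
          have h2 : M * ((byy - m) + (bx - m)) ≤ M * (Lt * ‖x - y‖) := by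
            rw [hsumb]
            exact mul_le_mul_of_nonneg_left htmlip hM0
          linarith
      _ ≤ (Lstar * bx + M * Lt + M * bx / r) * ‖x - y‖ := by
          have hnn : 0 ≤ M * bx / r * ‖x - y‖ :=
            mul_nonneg (div_nonneg (mul_nonneg hM0 hbx0) hr0.le) (norm_nonneg _)
          have hexp : (Lstar * bx + M * Lt + M * bx / r) * ‖x - y‖ =
              Lstar * ‖x - y‖ * bx + M * (Lt * ‖x - y‖) + M * bx / r * ‖x - y‖ := by ring
          rw [hexp]
          linarith
  · -- y outside E : the curve from y is empty and y is far from x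
    have hbyle : tminusR Φ E y ≤ 0 := by
      by_contra hpos
      push_neg at hpos
      have := hcurve y hyD 0 le_rfl hpos
      rw [neg_zero, hflow0] at this
      exact hyE this
    have hbyeq : tminusR Φ E y = 0 := le_antisymm hbyle (htm0 y)
    rw [hbyeq, intervalIntegral.integral_same]
    have hxy : r ≤ ‖x - y‖ := by
      by_contra hc
      push_neg at hc
      refine hyE (hballE ?_)
      rw [Metric.mem_ball, dist_comm, dist_eq_norm]
      exact hc
    have hIb : |(0:ℝ) - ∫ t in (0:ℝ)..(tminusR Φ E x), h x t| ≤ M * tminusR Φ E x := by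
      rw [zero_sub, abs_neg, ← Real.norm_eq_abs]
      have := intervalIntegral.norm_integral_le_of_norm_le_const (C := M)
        (f := h x) (a := 0) (b := tminusR Φ E x) ?_
      · rwa [sub_zero, abs_of_nonneg hbx0] at this
      · intro t hmem
        rw [Set.uIoc_of_le hbx0] at hmem
        rw [Real.norm_eq_abs]
        exact habs x t hmem.1.le
    refine hIb.trans ?_
    have hM1 : M * tminusR Φ E x = (M * tminusR Φ E x / r) * r := by
      field_simp
    calc M * tminusR Φ E x = (M * tminusR Φ E x / r) * r := hM1
      _ ≤ (M * tminusR Φ E x / r) * ‖x - y‖ := by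
          have : 0 ≤ M * tminusR Φ E x / r :=
            div_nonneg (mul_nonneg hM0 hbx0) hr0.le
          exact mul_le_mul_of_nonneg_left hxy this
      _ ≤ (Lstar * tminusR Φ E x + M * Lt + M * tminusR Φ E x / r) * ‖x - y‖ := by
          have h0 : 0 ≤ ‖x - y‖ := norm_nonneg _
          have h1 : 0 ≤ (Lstar * tminusR Φ E x + M * Lt) * ‖x - y‖ :=
            mul_nonneg (add_nonneg (mul_nonneg hLstar0 hbx0) (mul_nonneg hM0 hLt0)) h0
          have hexp : (Lstar * tminusR Φ E x + M * Lt + M * tminusR Φ E x / r) * ‖x - y‖ =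
              (Lstar * tminusR Φ E x + M * Lt) * ‖x - y‖ +
                M * tminusR Φ E x / r * ‖x - y‖ := by ring
          rw [hexp]
          linarith
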